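/- Let q, β ∈ ℝ with 0 < q < β, define a₀ := 0 and a_n := q·e^{a_{n−1}} − β, let x₀ < 0 be the unique solution of q·e^x − β = x, and set d_T := q·e^{x₀} and d_S := (x₀ − (q − β))/x₀. Then 0 < d_T < d_S < 1, and defining oa₀ := 0 and oa_n := (q − β) + d_S·oa_{n−1} − (1/2)·x₀²·d_T^n·(1 − d_S^{n−1}) for n ≥ 1, one has: (a) oa_n ≥ a_n for all n ≥ 1, with equality if and only if n = 1; (b) the sequence (oa_n)_{n≥1} is strictly decreasing; (c) lim_{n→∞} oa_n = lim_{n→∞} a_n = x₀. -/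

import Mathlib

open Real Filter

/-- `F s = (s-1)e^s + 1 - s^2/2` is nonnegative for `s ≥ 0`. -/
lemma F_nonneg : ∀ s : ℝ, 0 ≤ s → 0 ≤ (s - 1) * Real.exp s + 1 - s ^ 2 / 2 := by
  have hF : ∀ s : ℝ, HasDerivAt (fun s : ℝ => (s - 1) * Real.exp s + 1 - s ^ 2 / 2)
      (s * (Real.exp s - 1)) s := by
    intro s
    have h1 : HasDerivAt (fun s : ℝ => (s - 1) * Real.exp s)
        (1 * Real.exp s + (s - 1) * Real.exp s) s :=
      ((hasDerivAt_id s).sub_const 1).mul (Real.hasDerivAt_exp s)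
    have h2 : HasDerivAt (fun s : ℝ => (s - 1) * Real.exp s + 1 - s ^ 2 / 2)
        ((1 * Real.exp s + (s - 1) * Real.exp s) - (2 * s ^ 1) / 2) s := by
      exact (h1.add_const 1).sub ((hasDerivAt_pow 2 s).div_const 2)
    convert h2 using 1
    ring
  have hmono : MonotoneOn (fun s : ℝ => (s - 1) * Real.exp s + 1 - s ^ 2 / 2) (Set.Ici (0:ℝ)) := by
    apply monotoneOn_of_deriv_nonneg (convex_Ici 0)
    · exact fun s _ => ((hF s).continuousAt).continuousWithinAt
    · exact fun s _ => ((hF s).differentiableAt).differentiableWithinAt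
    · intro s hs
      rw [interior_Ici] at hs
      rw [(hF s).deriv]
      have h1 : (0:ℝ) ≤ Real.exp s - 1 := by
        have h2 := Real.add_one_le_exp s
        have h3 := Set.mem_Ioi.1 hs
        linarith
      exact mul_nonneg (le_of_lt (Set.mem_Ioi.1 hs)) h1
  intro s hs
  have := hmono (Set.self_mem_Ici) hs hs
  simpa using this

/-- Key inequality: for `0 ≤ t ≤ T`, `T*t/2*(T-t) ≤ t*(e^T-1) - T*(e^t-1)`. -/
lemma key_ineq (T : ℝ) (hT : 0 < T) (t : ℝ) (ht0 : 0 ≤ t) (htT : t ≤ T) :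
    T * t / 2 * (T - t) ≤ t * (Real.exp T - 1) - T * (Real.exp t - 1) := by
  rcases eq_or_lt_of_le ht0 with h | ht0'
  · simp [← h]
  have hg : ∀ s : ℝ, s ≠ 0 → HasDerivAt (fun s : ℝ => (Real.exp s - 1) / s - s / 2)
      (((s - 1) * Real.exp s + 1 - s ^ 2 / 2) / s ^ 2) s := by
    intro s hs
    have h1 : HasDerivAt (fun s : ℝ => (Real.exp s - 1) / s)
        ((Real.exp s * s - (Real.exp s - 1) * 1) / s ^ 2) s :=
      ((Real.hasDerivAt_exp s).sub_const 1).div (hasDerivAt_id s) hs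
    have h2 := h1.sub ((hasDerivAt_id s).div_const 2)
    refine HasDerivAt.congr_deriv h2 ?_
    field_simp
    ring
  have hmono : MonotoneOn (fun s : ℝ => (Real.exp s - 1) / s - s / 2) (Set.Ioi (0:ℝ)) := by
    apply monotoneOn_of_deriv_nonneg (convex_Ioi 0)
    · exact fun s hs => ((hg s (ne_of_gt hs)).continuousAt).continuousWithinAt
    · intro s hs
      rw [interior_Ioi] at hs
      exact ((hg s (ne_of_gt hs)).differentiableAt).differentiableWithinAt
    · intro s hs
      rw [interior_Ioi] at hs
      rw [(hg s (ne_of_gt hs)).deriv]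
      exact div_nonneg (F_nonneg s (le_of_lt hs)) (sq_nonneg s)
  have h := hmono (Set.mem_Ioi.2 ht0') (Set.mem_Ioi.2 hT) htT
  simp only at h
  have h2 : ((Real.exp t - 1) / t - t / 2) * (t * T) ≤ ((Real.exp T - 1) / T - T / 2) * (t * T) := by
    apply mul_le_mul_of_nonneg_right h
    positivity
  have htne : t ≠ 0 := ne_of_gt ht0'
  have hTne : T ≠ 0 := ne_of_gt hT
  have e1 : ((Real.exp t - 1) / t - t / 2) * (t * T) = (Real.exp t - 1) * T - t ^ 2 * T / 2 := by
    field_simp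
  have e2 : ((Real.exp T - 1) / T - T / 2) * (t * T) = (Real.exp T - 1) * t - T ^ 2 * t / 2 := by
    field_simp
  rw [e1, e2] at h2
  nlinarith [h2]


/-- The recursion `a₀ = 0`, `a_{n+1} = q·e^{a_n} − β`. -/
noncomputable def aSeq (q β : ℝ) : ℕ → ℝ
  | 0 => 0
  | n + 1 => q * Real.exp (aSeq q β n) - β

/-- The inhomogeneous linear "secant-line" approximation:
`oa₀ = 0`, `oa_n = c + d_S·oa_{n−1} − (1/2)·x₀²·d_T^n·(1 − d_S^{n−1})` (with `c = q − β`). -/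
noncomputable def oaSeq (c dS dT x₀ : ℝ) : ℕ → ℝ
  | 0 => 0
  | n + 1 => c + dS * oaSeq c dS dT x₀ n - (1 / 2) * x₀ ^ 2 * dT ^ (n + 1) * (1 - dS ^ n)

set_option maxHeartbeats 1000000 in
/-- For `0 < q < β`, let `x₀ < 0` be the unique solution of
`q·e^x − β = x`, `d_T = q·e^{x₀}` and `d_S = (x₀ − (q − β))/x₀`. Then `0 < d_T < d_S < 1`,
the secant approximation `oa` dominates `a` (with equality exactly at `n = 1`), is strictly
decreasing, and both sequences converge to `x₀`. -/
theorem aSeq_and_secant_approx (q β : ℝ) (hq : 0 < q) (hqβ : q < β)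
    (x₀ : ℝ) (hx₀neg : x₀ < 0) (hx₀fix : q * Real.exp x₀ - β = x₀)
    (dT dS : ℝ) (hdT : dT = q * Real.exp x₀) (hdS : dS = (x₀ - (q - β)) / x₀) :
    (0 < dT ∧ dT < dS ∧ dS < 1) ∧
    (∀ n : ℕ, 1 ≤ n →
      aSeq q β n ≤ oaSeq (q - β) dS dT x₀ n ∧ (oaSeq (q - β) dS dT x₀ n = aSeq q β n ↔ n = 1)) ∧
    (∀ n : ℕ, 1 ≤ n → oaSeq (q - β) dS dT x₀ (n + 1) < oaSeq (q - β) dS dT x₀ n) ∧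
    (Tendsto (oaSeq (q - β) dS dT x₀) atTop (nhds x₀) ∧ Tendsto (aSeq q β) atTop (nhds x₀)) := by
  have hexpx0 : 0 < Real.exp x₀ := Real.exp_pos x₀
  have hdTpos : 0 < dT := by rw [hdT]; positivity
  have hb : β = dT - x₀ := by rw [hdT]; linarith
  have hx0ne : x₀ ≠ 0 := ne_of_lt hx₀neg
  have hdsx : dS * x₀ = x₀ - (q - β) := by rw [hdS]; field_simp
  have hdS1 : dS < 1 := by nlinarith [hdsx]
  have hdTS : dT < dS := by
    have h1 : (1 - x₀) * Real.exp x₀ < 1 := by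
      have h2 := Real.add_one_lt_exp (show -x₀ ≠ 0 by simpa using hx0ne)
      rw [Real.exp_neg] at h2
      have h3 := mul_lt_mul_of_pos_right h2 hexpx0
      rw [inv_mul_cancel₀ (ne_of_gt hexpx0)] at h3
      linarith [h3]
    have h4 : dT * (1 - x₀) < q := by rw [hdT]; nlinarith [h1, hq]
    nlinarith [hdsx, h4, hb]
  have hdSpos : 0 < dS := lt_trans hdTpos hdTS
  have hdT1 : dT < 1 := lt_trans hdTS hdS1
  have hc : q - β = x₀ * (1 - dS) := by nlinarith [hdsx]
  -- tangent line inequality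
  have htang : ∀ x : ℝ, x₀ + dT * (x - x₀) ≤ q * Real.exp x - β := by
    intro x
    have h1 := Real.add_one_le_exp (x - x₀)
    have hexpmul : Real.exp x₀ * Real.exp (x - x₀) = Real.exp x := by
      rw [← Real.exp_add]; congr 1; ring
    have h2 : q * Real.exp x₀ * (x - x₀ + 1) ≤ q * Real.exp x₀ * Real.exp (x - x₀) :=
      mul_le_mul_of_nonneg_left h1 (by positivity)
    nth_rewrite 2 [mul_assoc] at h2
    rw [hexpmul] at h2
    rw [hdT]
    nlinarith [h2]
  -- secant line inequality with curvature correction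
  have hsec : ∀ x : ℝ, x₀ ≤ x → x ≤ 0 →
      dT / 2 * ((x - x₀) * (-x)) ≤ (q - β) + dS * x - (q * Real.exp x - β) := by
    intro x hx1 hx2
    have hT : (0:ℝ) < -x₀ := by linarith
    have key := key_ineq (-x₀) hT (x - x₀) (by linarith) (by linarith)
    have hexpmul : Real.exp x₀ * Real.exp (x - x₀) = Real.exp x := by
      rw [← Real.exp_add]; congr 1; ring
    have hqx : q * Real.exp x = dT * Real.exp (x - x₀) := by
      rw [hdT, mul_assoc, hexpmul]
    have hdTT : dT * Real.exp (-x₀) = q := by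
      rw [hdT, mul_assoc, ← Real.exp_add]
      simp
    have hqd : q - dT = dS * (-x₀) := by nlinarith [hdsx, hb]
    have key2 : dT * ((-x₀) * (x - x₀) / 2 * ((-x₀) - (x - x₀)))
        ≤ dT * ((x - x₀) * (Real.exp (-x₀) - 1) - (-x₀) * (Real.exp (x - x₀) - 1)) :=
      mul_le_mul_of_nonneg_left key hdTpos.le
    have hgoal_eq : (q - β) + dS * x - (q * Real.exp x - β)
        = dS * (x - x₀) - dT * (Real.exp (x - x₀) - 1) := by
      linear_combination hdsx - hqx + hb
    rw [hgoal_eq]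
    have hrhseq : dT * ((x - x₀) * (Real.exp (-x₀) - 1) - (-x₀) * (Real.exp (x - x₀) - 1))
        = (-x₀) * (dS * (x - x₀) - dT * (Real.exp (x - x₀) - 1)) := by
      linear_combination (x - x₀) * hdTT + (x - x₀) * hqd
    rw [hrhseq] at key2
    have hlhseq : dT * ((-x₀) * (x - x₀) / 2 * ((-x₀) - (x - x₀)))
        = (-x₀) * (dT / 2 * ((x - x₀) * (-x))) := by ring
    rw [hlhseq] at key2
    exact le_of_mul_le_mul_left key2 hT
  -- the main induction: bounds on aSeq and oaSeq
  have H : ∀ n : ℕ, x₀ * (1 - dT ^ n) ≤ aSeq q β n ∧ aSeq q β n ≤ x₀ * (1 - dS ^ n) ∧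
      aSeq q β n ≤ oaSeq (q - β) dS dT x₀ n ∧ oaSeq (q - β) dS dT x₀ n ≤ x₀ * (1 - dS ^ n) := by
    intro n
    induction n with
    | zero => simp [aSeq, oaSeq]
    | succ n ih =>
      obtain ⟨h1, h2, h3, h4⟩ := ih
      have hdTn : 0 < dT ^ n := pow_pos hdTpos n
      have hdSn : 0 < dS ^ n := pow_pos hdSpos n
      have hdSn1 : dS ^ n ≤ 1 := pow_le_one₀ hdSpos.le hdS1.le
      have hdTn1 : dT ^ n ≤ 1 := pow_le_one₀ hdTpos.le hdT1.le
      have hq1 : 0 ≤ -x₀ * dT ^ n := mul_nonneg (by linarith) hdTn.le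
      have hq2 : 0 ≤ -x₀ * (1 - dS ^ n) := mul_nonneg (by linarith) (by linarith)
      have hx0a : x₀ ≤ aSeq q β n := by linarith [h1]
      have han : aSeq q β n ≤ 0 := by nlinarith [h2]
      have hS := hsec (aSeq q β n) hx0a han
      have hprodpos : 0 ≤ dT / 2 * ((aSeq q β n - x₀) * (-aSeq q β n)) := by
        apply mul_nonneg (by linarith)
        apply mul_nonneg <;> linarith
      have p1 : -x₀ * dT ^ n ≤ aSeq q β n - x₀ := by linarith [h1]
      have p2 : -(x₀ * (1 - dS ^ n)) ≤ -aSeq q β n := by linarith [h2]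
      have hprod : (-x₀ * dT ^ n) * (-(x₀ * (1 - dS ^ n))) ≤ (aSeq q β n - x₀) * (-aSeq q β n) :=
        mul_le_mul p1 p2 (by linarith [hq2]) (by linarith [p1, hq1])
      have hprod2 : dT / 2 * ((-x₀ * dT ^ n) * (-(x₀ * (1 - dS ^ n))))
          ≤ dT / 2 * ((aSeq q β n - x₀) * (-aSeq q β n)) :=
        mul_le_mul_of_nonneg_left hprod (by linarith)
      have hdsa : dS * aSeq q β n ≤ dS * oaSeq (q - β) dS dT x₀ n :=
        mul_le_mul_of_nonneg_left h3 hdSpos.le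
      have hdsa2 : dS * aSeq q β n ≤ dS * (x₀ * (1 - dS ^ n)) :=
        mul_le_mul_of_nonneg_left h2 hdSpos.le
      have hdso : dS * oaSeq (q - β) dS dT x₀ n ≤ dS * (x₀ * (1 - dS ^ n)) :=
        mul_le_mul_of_nonneg_left h4 hdSpos.le
      have ht := htang (aSeq q β n)
      have hta : dT * (-x₀ * dT ^ n) ≤ dT * (aSeq q β n - x₀) :=
        mul_le_mul_of_nonneg_left p1 hdTpos.le
      have hcorr : 0 ≤ (1 / 2) * x₀ ^ 2 * dT ^ (n + 1) * (1 - dS ^ n) :=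
        mul_nonneg (by positivity) (by linarith)
      have heqS : (q - β) + dS * (x₀ * (1 - dS ^ n)) = x₀ * (1 - dS ^ (n + 1)) := by
        rw [hc, pow_succ]; ring
      refine ⟨?_, ?_, ?_, ?_⟩
      · show x₀ * (1 - dT ^ (n + 1)) ≤ q * Real.exp (aSeq q β n) - β
        have heqT : x₀ + dT * (-x₀ * dT ^ n) = x₀ * (1 - dT ^ (n + 1)) := by
          rw [pow_succ]; ring
        linarith [ht, hta, heqT]
      · show q * Real.exp (aSeq q β n) - β ≤ x₀ * (1 - dS ^ (n + 1))
        linarith [hS, hprodpos, hdsa2, heqS]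
      · show q * Real.exp (aSeq q β n) - β ≤
          (q - β) + dS * oaSeq (q - β) dS dT x₀ n - (1 / 2) * x₀ ^ 2 * dT ^ (n + 1) * (1 - dS ^ n)
        have he : dT / 2 * ((-x₀ * dT ^ n) * (-(x₀ * (1 - dS ^ n))))
            = (1 / 2) * x₀ ^ 2 * dT ^ (n + 1) * (1 - dS ^ n) := by
          rw [pow_succ]; ring
        linarith [hS, hprod2, hdsa, he]
      · show (q - β) + dS * oaSeq (q - β) dS dT x₀ n
            - (1 / 2) * x₀ ^ 2 * dT ^ (n + 1) * (1 - dS ^ n) ≤ x₀ * (1 - dS ^ (n + 1))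
        linarith [hdso, hcorr, heqS]
  -- values at 1
  have ha1 : aSeq q β 1 = q - β := by
    show q * Real.exp (aSeq q β 0) - β = q - β
    rw [show aSeq q β 0 = 0 from rfl, Real.exp_zero]; ring
  have hoa1 : oaSeq (q - β) dS dT x₀ 1 = q - β := by
    show (q - β) + dS * oaSeq (q - β) dS dT x₀ 0 - (1 / 2) * x₀ ^ 2 * dT ^ (0 + 1) * (1 - dS ^ 0)
      = q - β
    rw [show oaSeq (q - β) dS dT x₀ 0 = 0 from rfl]
    norm_num
  -- strict inequality for n ≥ 2
  have Hstrict : ∀ n : ℕ, 2 ≤ n → aSeq q β n < oaSeq (q - β) dS dT x₀ n := by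
    intro n hn
    induction n, hn using Nat.le_induction with
    | base =>
      have hx1 : x₀ ≤ q - β := by nlinarith [hc]
      have hx2 : q - β ≤ 0 := by linarith
      have hS := hsec (q - β) hx1 hx2
      have hpe : (q - β - x₀) * (-(q - β)) = x₀ ^ 2 * dS * (1 - dS) := by rw [hc]; ring
      rw [hpe] at hS
      have hstr : x₀ ^ 2 * dT * (1 - dS) < x₀ ^ 2 * dS * (1 - dS) := by
        have hx0sq : 0 < x₀ ^ 2 := by positivity
        nlinarith [mul_pos (mul_pos hx0sq (sub_pos.2 hdTS)) (sub_pos.2 hdS1)]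
      have h5 : dT / 2 * (x₀ ^ 2 * dT * (1 - dS)) < dT / 2 * (x₀ ^ 2 * dS * (1 - dS)) :=
        mul_lt_mul_of_pos_left hstr (by linarith)
      have he : dT / 2 * (x₀ ^ 2 * dT * (1 - dS)) = (1 / 2) * x₀ ^ 2 * dT ^ (1 + 1) * (1 - dS ^ 1) := by
        ring
      show aSeq q β (1 + 1) < oaSeq (q - β) dS dT x₀ (1 + 1)
      show q * Real.exp (aSeq q β 1) - β <
        (q - β) + dS * oaSeq (q - β) dS dT x₀ 1 - (1 / 2) * x₀ ^ 2 * dT ^ (1 + 1) * (1 - dS ^ 1)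
      rw [ha1, hoa1]
      linarith [hS, h5, he]
    | succ n hn ih =>
      obtain ⟨h1, h2, h3, h4⟩ := H n
      have hdTn : 0 < dT ^ n := pow_pos hdTpos n
      have hdSn : 0 < dS ^ n := pow_pos hdSpos n
      have hdSn1 : dS ^ n ≤ 1 := pow_le_one₀ hdSpos.le hdS1.le
      have hq1 : 0 ≤ -x₀ * dT ^ n := mul_nonneg (by linarith) hdTn.le
      have hq2 : 0 ≤ -x₀ * (1 - dS ^ n) := mul_nonneg (by linarith) (by linarith)
      have hx0a : x₀ ≤ aSeq q β n := by linarith [h1]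
      have han : aSeq q β n ≤ 0 := by nlinarith [h2]
      have hS := hsec (aSeq q β n) hx0a han
      have p1 : -x₀ * dT ^ n ≤ aSeq q β n - x₀ := by linarith [h1]
      have p2 : -(x₀ * (1 - dS ^ n)) ≤ -aSeq q β n := by linarith [h2]
      have hprod : (-x₀ * dT ^ n) * (-(x₀ * (1 - dS ^ n))) ≤ (aSeq q β n - x₀) * (-aSeq q β n) :=
        mul_le_mul p1 p2 (by linarith [hq2]) (by linarith [p1, hq1])
      have hprod2 : dT / 2 * ((-x₀ * dT ^ n) * (-(x₀ * (1 - dS ^ n))))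
          ≤ dT / 2 * ((aSeq q β n - x₀) * (-aSeq q β n)) :=
        mul_le_mul_of_nonneg_left hprod (by linarith)
      have hdsa : dS * aSeq q β n < dS * oaSeq (q - β) dS dT x₀ n :=
        mul_lt_mul_of_pos_left ih hdSpos
      have he : dT / 2 * ((-x₀ * dT ^ n) * (-(x₀ * (1 - dS ^ n))))
          = (1 / 2) * x₀ ^ 2 * dT ^ (n + 1) * (1 - dS ^ n) := by
        rw [pow_succ]; ring
      show q * Real.exp (aSeq q β n) - β <
        (q - β) + dS * oaSeq (q - β) dS dT x₀ n - (1 / 2) * x₀ ^ 2 * dT ^ (n + 1) * (1 - dS ^ n)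
      linarith [hS, hprod2, hdsa, he]
  -- strict decrease
  have Hdec : ∀ n : ℕ, 1 ≤ n → oaSeq (q - β) dS dT x₀ (n + 1) < oaSeq (q - β) dS dT x₀ n := by
    intro n _
    obtain ⟨h1, h2, h3, h4⟩ := H n
    have hdTn : 0 < dT ^ n := pow_pos hdTpos n
    have hdSn1 : dS ^ n ≤ 1 := pow_le_one₀ hdSpos.le hdS1.le
    have hoagt : x₀ < oaSeq (q - β) dS dT x₀ n := by
      have h5 : 0 < -x₀ * dT ^ n := mul_pos (by linarith) hdTn
      linarith [h1, h3]
    have hcorr : 0 ≤ (1 / 2) * x₀ ^ 2 * dT ^ (n + 1) * (1 - dS ^ n) :=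
      mul_nonneg (by positivity) (by linarith)
    have hp : 0 < (1 - dS) * (oaSeq (q - β) dS dT x₀ n - x₀) :=
      mul_pos (by linarith) (by linarith)
    show (q - β) + dS * oaSeq (q - β) dS dT x₀ n
        - (1 / 2) * x₀ ^ 2 * dT ^ (n + 1) * (1 - dS ^ n) < oaSeq (q - β) dS dT x₀ n
    nlinarith [hc, hp, hcorr]
  -- limits
  have hTlim : Tendsto (fun n : ℕ => x₀ * (1 - dT ^ n)) atTop (nhds x₀) := by
    have h0 : Tendsto (fun n : ℕ => dT ^ n) atTop (nhds 0) :=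
      tendsto_pow_atTop_nhds_zero_of_lt_one hdTpos.le hdT1
    have h1 : Tendsto (fun n : ℕ => x₀ * (1 - dT ^ n)) atTop (nhds (x₀ * (1 - 0))) :=
      ((tendsto_const_nhds (x := (1:ℝ)) (f := atTop (α := ℕ))).sub h0).const_mul x₀
    simpa using h1
  have hSlim : Tendsto (fun n : ℕ => x₀ * (1 - dS ^ n)) atTop (nhds x₀) := by
    have h0 : Tendsto (fun n : ℕ => dS ^ n) atTop (nhds 0) :=
      tendsto_pow_atTop_nhds_zero_of_lt_one hdSpos.le hdS1
    have h1 : Tendsto (fun n : ℕ => x₀ * (1 - dS ^ n)) atTop (nhds (x₀ * (1 - 0))) :=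
      ((tendsto_const_nhds (x := (1:ℝ)) (f := atTop (α := ℕ))).sub h0).const_mul x₀
    simpa using h1
  have halim : Tendsto (aSeq q β) atTop (nhds x₀) :=
    tendsto_of_tendsto_of_tendsto_of_le_of_le hTlim hSlim
      (fun n => (H n).1) (fun n => (H n).2.1)
  have hoalim : Tendsto (oaSeq (q - β) dS dT x₀) atTop (nhds x₀) :=
    tendsto_of_tendsto_of_tendsto_of_le_of_le hTlim hSlim
      (fun n => le_trans (H n).1 (H n).2.2.1) (fun n => (H n).2.2.2)
  refine ⟨⟨hdTpos, hdTS, hdS1⟩, ?_, Hdec, hoalim, halim⟩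
  intro n hn
  refine ⟨(H n).2.2.1, ?_, ?_⟩
  · intro heq
    by_contra hne
    have h2n : 2 ≤ n := by omega
    exact (ne_of_gt (Hstrict n h2n)) heq
  · rintro rfl
    rw [ha1, hoa1]
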